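/- The function h(x) = 9x + log(1−2x) − log x − 3 has exactly one zero l in the open interval (0, 1/4), and this zero satisfies l < 1/6. -/

import Mathlib

noncomputable def hfun : ℝ → ℝ := fun x => 9 * x + Real.log (1 - 2*x) - Real.log x - 3

lemma hfun_deriv (x : ℝ) (hx0 : 0 < x) (hx : x < 1/2) :
    HasDerivAt hfun (9 - 2/(1-2*x) - 1/x) x := by
  have h1 : HasDerivAt (fun x : ℝ => 1 - 2*x) (-2) x := by
    simpa using ((hasDerivAt_id x).const_mul 2).const_sub 1
  have h2 : HasDerivAt (fun x => Real.log (1 - 2*x)) (-2/(1-2*x)) x :=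
    h1.log (by nlinarith)
  have h3 : HasDerivAt Real.log (1/x) x := by
    simpa [one_div] using Real.hasDerivAt_log hx0.ne'
  have h4 : HasDerivAt (fun x : ℝ => 9 * x) 9 x := by
    simpa using (hasDerivAt_id x).const_mul 9
  have := ((h4.add h2).sub h3).sub_const 3
  refine this.congr_deriv ?_
  ring

lemma hfun_contAt (x : ℝ) (hx0 : 0 < x) (hx : x < 1/2) : ContinuousAt hfun x :=
  (hfun_deriv x hx0 hx).continuousAt

lemma hfun_anti : StrictAntiOn hfun (Set.Ioc 0 (1/6)) := by
  apply strictAntiOn_of_deriv_neg (convex_Ioc _ _)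
  · intro x hx
    exact (hfun_contAt x hx.1 (by linarith [hx.2] : x < 1/2)).continuousWithinAt
  · intro x hx
    rw [interior_Ioc] at hx
    obtain ⟨hx0, hx6⟩ := hx
    have hx2 : (0:ℝ) < 1 - 2*x := by linarith
    rw [(hfun_deriv x hx0 (by linarith)).deriv]
    have e : 9 - 2/(1-2*x) - 1/x = (9*(x*(1-2*x)) - (2*x + (1-2*x)))/(x*(1-2*x)) := by
      field_simp; ring
    rw [e]
    apply div_neg_of_neg_of_pos
    · nlinarith [mul_pos (by linarith : (0:ℝ) < 1 - 3*x) (by linarith : (0:ℝ) < 1 - 6*x)]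
    · positivity

lemma hfun_mono : StrictMonoOn hfun (Set.Icc (1/6) (1/4)) := by
  apply strictMonoOn_of_deriv_pos (convex_Icc _ _)
  · intro x hx
    exact (hfun_contAt x (by linarith [hx.1]) (by linarith [hx.2])).continuousWithinAt
  · intro x hx
    rw [interior_Icc] at hx
    obtain ⟨hx6, hx4⟩ := hx
    have hx0 : (0:ℝ) < x := by linarith
    have hx2 : (0:ℝ) < 1 - 2*x := by linarith
    rw [(hfun_deriv x hx0 (by linarith)).deriv]
    have e : 9 - 2/(1-2*x) - 1/x = (9*(x*(1-2*x)) - (2*x + (1-2*x)))/(x*(1-2*x)) := by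
      field_simp; ring
    rw [e]
    apply div_pos
    · nlinarith [mul_pos (by linarith : (0:ℝ) < 6*x - 1) (by linarith : (0:ℝ) < 1 - 3*x)]
    · positivity

lemma hfun_at_sixth : hfun (1/6) < 0 := by
  have key : Real.log (2/3) - Real.log (1/6) = Real.log 4 := by
    rw [← Real.log_div (by norm_num) (by norm_num)]; norm_num
  have e : hfun (1/6) = Real.log 4 - 3/2 := by
    unfold hfun
    rw [show (1:ℝ) - 2*(1/6) = 2/3 by norm_num]
    linarith [key]
  have h4 : Real.log 4 = 2 * Real.log 2 := by
    rw [show (4:ℝ) = 2^2 by norm_num, Real.log_pow]; push_cast; ring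
  rw [e, h4]
  linarith [Real.log_two_lt_d9]

lemma hfun_at_quarter : hfun (1/4) < 0 := by
  have key : Real.log (1/2) - Real.log (1/4) = Real.log 2 := by
    rw [← Real.log_div (by norm_num) (by norm_num)]; norm_num
  have e : hfun (1/4) = Real.log 2 - 3/4 := by
    unfold hfun
    rw [show (1:ℝ) - 2*(1/4) = 1/2 by norm_num]
    linarith [key]
  rw [e]
  linarith [Real.log_two_lt_d9]

lemma hfun_at_twentieth : 0 < hfun (1/20) := by
  have key : Real.log (9/10) - Real.log (1/20) = Real.log 18 := by
    rw [← Real.log_div (by norm_num) (by norm_num)]; norm_num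
  have e : hfun (1/20) = Real.log 18 - 51/20 := by
    unfold hfun
    rw [show (1:ℝ) - 2*(1/20) = 9/10 by norm_num]
    linarith [key]
  have h16 : Real.log 16 ≤ Real.log 18 := Real.log_le_log (by norm_num) (by norm_num)
  have h16e : Real.log 16 = 4 * Real.log 2 := by
    rw [show (16:ℝ) = 2^4 by norm_num, Real.log_pow]; push_cast; ring
  rw [e]
  have := Real.log_two_gt_d9
  linarith

theorem unique_root_in_Ioo :
    ∃ l : ℝ, l ∈ Set.Ioo (0 : ℝ) (1/4) ∧
      9 * l + Real.log (1 - 2*l) - Real.log l - 3 = 0 ∧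
      l < 1/6 ∧
      ∀ l' ∈ Set.Ioo (0 : ℝ) (1/4),
        9 * l' + Real.log (1 - 2*l') - Real.log l' - 3 = 0 → l' = l := by
  have hcont : ContinuousOn hfun (Set.Icc (1/20) (1/6)) := by
    intro x hx
    exact (hfun_contAt x (by linarith [hx.1]) (by linarith [hx.2])).continuousWithinAt
  have hivt := intermediate_value_Icc' (by norm_num : (1/20 : ℝ) ≤ 1/6) hcont
  have h0mem : (0:ℝ) ∈ Set.Icc (hfun (1/6)) (hfun (1/20)) :=
    ⟨le_of_lt hfun_at_sixth, le_of_lt hfun_at_twentieth⟩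
  obtain ⟨l, hl, hl0⟩ := hivt h0mem
  have hlne : l ≠ 1/6 := by
    intro h; rw [h] at hl0; exact absurd hl0 (ne_of_lt hfun_at_sixth)
  have hl6 : l < 1/6 := lt_of_le_of_ne hl.2 hlne
  have hlpos : (0:ℝ) < l := by linarith [hl.1]
  have hlmem : l ∈ Set.Ioc (0:ℝ) (1/6) := ⟨hlpos, le_of_lt hl6⟩
  refine ⟨l, ⟨hlpos, by linarith⟩, hl0, hl6, ?_⟩
  intro l' hl' hzero
  have hzero' : hfun l' = 0 := hzero
  by_cases hcase : l' ≤ 1/6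
  · exact hfun_anti.injOn ⟨hl'.1, hcase⟩ hlmem (hzero'.trans hl0.symm)
  · exfalso
    push_neg at hcase
    have : hfun l' < hfun (1/4) :=
      hfun_mono ⟨le_of_lt hcase, le_of_lt hl'.2⟩ ⟨by norm_num, le_refl _⟩ hl'.2
    have := hfun_at_quarter
    rw [hzero'] at *
    linarith
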